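/- Let k ≥ 4 be an integer, and set ε := e^{−4k²}, p := e^{−2k}, and N := 2k. Let X₁,…,X_N be independent random variables where X₁ = ⋯ = X_k = 1 deterministically, and X_{k+1},…,X_{2k} each equal 1+√ε with probability 1−p and equal 0 with probability p. Let σ be a uniformly random permutation of {1,…,N}, independent of X₁,…,X_N, set Y_m := X_{σ(m)} for m = 1,…,N, and let 𝔉 = (𝔉_m)_{m=0}^{N} be the filtration where 𝔉_m is generated by (σ(1), Y₁),…,(σ(m), Y_m). Then for every stopping time T with respect to 𝔉 taking values in {1,…,N} ∪ {∞}, it holds that E[Y_T·𝟙{T ≤ N}] ≤ 1 + √ε − √ε·4^{−k} < (1 − ε)·(1 + √ε·(1 − p)). -/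

import Mathlib

open MeasureTheory ProbabilityTheory

private def blockPerm (k : ℕ) (ab : Equiv.Perm (Fin k) × Equiv.Perm (Fin k)) :
    Equiv.Perm (Fin (2*k)) :=
  (Equiv.permCongr (finCongr (show k + k = 2*k by ring)))
    (finSumFinEquiv.symm.trans ((Equiv.sumCongr ab.1 ab.2).trans finSumFinEquiv))

private lemma blockPerm_apply₁ (k : ℕ) (a b : Equiv.Perm (Fin k)) (j : Fin (2*k))
    (hj : (j:ℕ) < k) : ((blockPerm k (a,b)) j : ℕ) = (a ⟨j, hj⟩ : ℕ) := by
  have hkk : k + k = 2*k := by ring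
  have hsymm : (finCongr hkk).symm j = Fin.castAdd k (⟨(j:ℕ), hj⟩ : Fin k) := by
    apply Fin.ext; simp
  unfold blockPerm
  simp only [Equiv.permCongr_apply, Equiv.trans_apply, hsymm,
    finSumFinEquiv_symm_apply_castAdd, Equiv.sumCongr_apply, Sum.map_inl,
    finSumFinEquiv_apply_left]
  simp

private lemma blockPerm_apply₂ (k : ℕ) (a b : Equiv.Perm (Fin k)) (j : Fin (2*k))
    (hj : k ≤ (j:ℕ)) : ((blockPerm k (a,b)) j : ℕ) = k + (b ⟨(j:ℕ) - k, by omega⟩ : ℕ) := by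
  have hkk : k + k = 2*k := by ring
  have hsymm : (finCongr hkk).symm j = Fin.natAdd k (⟨(j:ℕ) - k, by omega⟩ : Fin k) := by
    apply Fin.ext; simp; omega
  unfold blockPerm
  simp only [Equiv.permCongr_apply, Equiv.trans_apply, hsymm,
    finSumFinEquiv_symm_apply_natAdd, Equiv.sumCongr_apply, Sum.map_inr,
    finSumFinEquiv_apply_right]
  simp; omega

private lemma blockPerm_inj (k : ℕ) : Function.Injective (blockPerm k) := by
  rintro ⟨a₁, a₂⟩ ⟨b₁, b₂⟩ h
  have e1 : a₁ = b₁ := by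
    apply Equiv.ext; intro i
    have hcongr := congrArg (fun e : Equiv.Perm (Fin (2*k)) =>
      ((e ⟨(i:ℕ), by omega⟩ : Fin (2*k)) : ℕ)) h
    simp only [blockPerm_apply₁ k a₁ a₂ ⟨(i:ℕ), by omega⟩ i.2,
      blockPerm_apply₁ k b₁ b₂ ⟨(i:ℕ), by omega⟩ i.2] at hcongr
    apply Fin.ext; simpa using hcongr
  have e2 : a₂ = b₂ := by
    apply Equiv.ext; intro i
    have hik : k ≤ ((⟨k + (i:ℕ), by omega⟩ : Fin (2*k)) : ℕ) := by simp
    have hcongr := congrArg (fun e : Equiv.Perm (Fin (2*k)) =>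
      ((e ⟨k + (i:ℕ), by omega⟩ : Fin (2*k)) : ℕ)) h
    simp only [blockPerm_apply₂ k a₁ a₂ ⟨k + (i:ℕ), by omega⟩ hik,
      blockPerm_apply₂ k b₁ b₂ ⟨k + (i:ℕ), by omega⟩ hik] at hcongr
    have hfix : (⟨k + (i:ℕ) - k, by omega⟩ : Fin k) = i := by apply Fin.ext; simp
    rw [hfix] at hcongr
    apply Fin.ext; omega
  rw [e1, e2]

private lemma perm_count (k : ℕ) :
    k.factorial * k.factorial ≤ (Finset.univ.filter
      (fun e : Equiv.Perm (Fin (2*k)) =>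
        ∀ j : Fin (2*k), (j:ℕ) < k → ((e j : ℕ) < k))).card := by
  calc k.factorial * k.factorial
      = Fintype.card (Equiv.Perm (Fin k) × Equiv.Perm (Fin k)) := by
        simp [Fintype.card_perm]
    _ = (Finset.univ.image (blockPerm k)).card := by
        rw [Finset.card_image_of_injective _ (blockPerm_inj k), Finset.card_univ]
    _ ≤ _ := by
        apply Finset.card_le_card
        intro e he
        simp only [Finset.mem_image] at he
        obtain ⟨⟨a, b⟩, _, rfl⟩ := he
        simp only [Finset.mem_filter, Finset.mem_univ, true_and]
        intro j hj
        rw [blockPerm_apply₁ k a b j hj]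
        exact (a ⟨(j:ℕ), hj⟩).2

private lemma maps_ge (k : ℕ) (g : Fin (2*k) → Fin (2*k)) (hg : Function.Injective g)
    (h : ∀ j : Fin (2*k), (j:ℕ) < k → ((g j : ℕ) < k)) :
    ∀ j : Fin (2*k), k ≤ (j:ℕ) → k ≤ ((g j : ℕ)) := by
  intro j hj
  by_contra hc
  push_neg at hc
  classical
  set Sf : Finset (Fin (2*k)) := Finset.univ.filter (fun i => (i:ℕ) < k) with hSf
  have himg : Sf.image g = Sf := by
    apply Finset.eq_of_subset_of_card_le
    · intro x hx
      simp only [hSf, Finset.mem_image, Finset.mem_filter, Finset.mem_univ, true_and] at hx ⊢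
      obtain ⟨a, ha, rfl⟩ := hx
      exact h a ha
    · exact le_of_eq (Finset.card_image_of_injective _ hg).symm
  have hmem : g j ∈ Sf.image g := by
    rw [himg]; simp [hSf, hc]
  obtain ⟨i, hi, hij⟩ := Finset.mem_image.mp hmem
  have hieq := hg hij
  subst hieq
  simp only [hSf, Finset.mem_filter, Finset.mem_univ, true_and] at hi
  omega

set_option maxHeartbeats 1000000 in
/-- **Theorem 5 (thm:general), lower bound.** Discrete-time hard instance for general
adaptive algorithms: with `k ≥ 4`, `ε = e^{−4k²}`, `p = e^{−2k}` and `N = 2k` rewards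
(`k` deterministic rewards equal to `1` and `k` i.i.d. rewards equal to `1+√ε` w.p. `1−p`
and `0` w.p. `p`) presented in a uniformly random order `σ` independent of the rewards,
every stopping time `T` (with values in `{1,…,N} ∪ {∞}`) with respect to the filtration
generated by the observed identities and values satisfies
`E[Y_T·𝟙{T ≤ N}] ≤ 1 + √ε − √ε·4^{−k} < (1−ε)·(1+√ε·(1−p))`. -/
theorem stmt16
    (k : ℕ) (hk : 4 ≤ k)
    (ε p : ℝ) (hεdef : ε = Real.exp (-(4 * (k:ℝ) ^ 2))) (hpdef : p = Real.exp (-(2 * (k:ℝ))))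
    (Ω : Type*) [MeasurableSpace Ω] (μ : Measure Ω) [IsProbabilityMeasure μ]
    -- the rewards X₁,…,X_N
    (X : Fin (2 * k) → Ω → ℝ) (hmX : ∀ m, Measurable (X m))
    (hXdet : ∀ m : Fin (2 * k), (m : ℕ) < k → ∀ ω, X m ω = 1)
    (hXrand : ∀ m : Fin (2 * k), k ≤ (m : ℕ) →
      Measure.map (X m) μ =
        ENNReal.ofReal p • Measure.dirac 0
          + ENNReal.ofReal (1 - p) • Measure.dirac (1 + Real.sqrt ε))
    (hXindep : iIndepFun X μ)
    -- the uniformly random arrival order σ, independent of the rewards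
    (σ : Ω → Fin (2 * k) → Fin (2 * k)) (hmσ : Measurable σ)
    (hσbij : ∀ ω, Function.Bijective (σ ω))
    (hσunif : ∀ e : Equiv.Perm (Fin (2 * k)),
      μ {ω | σ ω = ⇑e} = ((2 * k).factorial : ENNReal)⁻¹)
    (hσindep : IndepFun (fun ω (m : Fin (2 * k)) => X m ω) σ μ)
    -- T is a stopping time with values in {1,…,N} ∪ {∞} with respect to the filtration
    -- 𝔉_m generated by the observed pairs (σ(1),Y₁),…,(σ(m),Y_m), where Y_j = X_{σ(j)}
    (T : Ω → ℕ∞)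
    (hT1 : ∀ ω, 1 ≤ T ω)
    (hTN : ∀ ω, T ω ≤ (2 * k : ℕ) ∨ T ω = ⊤)
    (hTstop : ∀ m : ℕ, MeasurableSet[MeasurableSpace.comap
      (fun ω (j : Fin (2 * k)) =>
        if (j : ℕ) < m then (σ ω j, X (σ ω j) ω) else ((⟨0, by omega⟩ : Fin (2 * k)), 0))
      inferInstance] {ω | T ω ≤ (m : ℕ∞)}) :
    (∫ ω, (if h : 1 ≤ (T ω).toNat ∧ (T ω).toNat ≤ 2 * k
        then X (σ ω ⟨(T ω).toNat - 1, by omega⟩) ω else 0) ∂μ)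
      ≤ 1 + Real.sqrt ε - Real.sqrt ε / 4 ^ k ∧
    1 + Real.sqrt ε - Real.sqrt ε / 4 ^ k < (1 - ε) * (1 + Real.sqrt ε * (1 - p)) := by
  classical
  have hN : 0 < 2*k := by omega
  -- basic numeric facts
  have hp0 : 0 < p := hpdef ▸ Real.exp_pos _
  have hp1 : p < 1 := by
    rw [hpdef, Real.exp_lt_one_iff]
    have : (0:ℝ) < (k:ℝ) := by exact_mod_cast (by omega : 0 < k)
    linarith
  have hε0 : 0 < ε := hεdef ▸ Real.exp_pos _
  have hs0 : 0 < Real.sqrt ε := Real.sqrt_pos.mpr hε0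
  have hsqε : Real.sqrt ε = p ^ k := by
    have h1 : ε = Real.exp (-(2*(k:ℝ)^2)) * Real.exp (-(2*(k:ℝ)^2)) := by
      rw [hεdef, ← Real.exp_add]; ring_nf
    have h2 : Real.sqrt ε = Real.exp (-(2*(k:ℝ)^2)) := by
      rw [h1, Real.sqrt_mul_self (Real.exp_pos _).le]
    rw [h2, hpdef, ← Real.exp_nat_mul]
    congr 1; ring
  have hpk1 : p ^ k ≤ 1 := pow_le_one₀ hp0.le hp1.le
  -- measurability of basic maps
  have hσj : ∀ j : Fin (2*k), Measurable (fun ω => σ ω j) :=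
    fun j => (measurable_pi_apply j).comp hmσ
  have hXσ : ∀ j : Fin (2*k), Measurable (fun ω => X (σ ω j) ω) := by
    intro j
    have heq : (fun ω => X (σ ω j) ω)
        = fun ω => ∑ i : Fin (2*k), if σ ω j = i then X i ω else 0 := by
      funext ω
      rw [Finset.sum_ite_eq]
      simp
    rw [heq]
    exact Finset.measurable_sum _ fun i _ =>
      Measurable.ite ((hσj j) (measurableSet_singleton i)) (hmX i) measurable_const
  have hfm : ∀ m : ℕ, Measurable (fun ω (j : Fin (2*k)) =>
      if (j:ℕ) < m then (σ ω j, X (σ ω j) ω) else ((⟨0, hN⟩ : Fin (2*k)), (0:ℝ))) := by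
    intro m
    apply measurable_pi_lambda
    intro j
    by_cases h : (j:ℕ) < m
    · simp only [if_pos h]
      exact (hσj j).prodMk (hXσ j)
    · simp only [if_neg h]
      exact measurable_const
  have hTle : ∀ m : ℕ, MeasurableSet {ω | T ω ≤ (m:ℕ∞)} := by
    intro m
    obtain ⟨S, hS, hpre⟩ := hTstop m
    rw [← hpre]
    exact (hfm m) hS
  have hTeq : ∀ m : ℕ, MeasurableSet {ω | T ω = ((m+1 : ℕ) : ℕ∞)} := by
    intro m
    have heq : {ω | T ω = ((m+1:ℕ):ℕ∞)}
        = {ω | T ω ≤ ((m+1:ℕ):ℕ∞)} ∩ {ω | T ω ≤ (m:ℕ∞)}ᶜ := by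
      ext ω
      simp only [Set.mem_setOf_eq, Set.mem_inter_iff, Set.mem_compl_iff]
      constructor
      · rintro h
        rw [h]
        refine ⟨le_rfl, ?_⟩
        intro hc
        have : (m+1 : ℕ) ≤ (m : ℕ) := by exact_mod_cast hc
        omega
      · rintro ⟨h1, h2⟩
        have hlt : (m : ℕ∞) < T ω := lt_of_not_ge h2
        have h3 : ((m:ℕ∞) + 1) ≤ T ω := (ENat.add_one_le_iff (by simp)).mpr hlt
        have h4 : ((m+1:ℕ):ℕ∞) = (m:ℕ∞) + 1 := by push_cast; rfl
        rw [h4]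
        exact le_antisymm (h4 ▸ h1) h3
    rw [heq]
    exact (hTle (m+1)).inter (hTle m).compl
  -- the value process
  set V : Ω → ℝ := fun ω =>
    (if h : 1 ≤ (T ω).toNat ∧ (T ω).toNat ≤ 2 * k
      then X (σ ω ⟨(T ω).toNat - 1, by omega⟩) ω else 0) with hV
  have hfin : ∀ ω, (1 ≤ (T ω).toNat ∧ (T ω).toNat ≤ 2*k) ↔ T ω ≠ ⊤ := by
    intro ω
    rcases hTN ω with h | h
    · have hne : T ω ≠ ⊤ := ne_top_of_le_ne_top (ENat.coe_ne_top (2*k)) h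
      have hc := ENat.coe_toNat hne
      constructor
      · intro _; exact hne
      · intro _
        constructor
        · have := hT1 ω
          rw [← hc] at this
          exact_mod_cast this
        · rw [← hc] at h
          exact_mod_cast h
    · simp [h]
  have hVsum : ∀ ω, V ω
      = ∑ m : Fin (2*k), if T ω = (((m:ℕ)+1 : ℕ) : ℕ∞) then X (σ ω m) ω else 0 := by
    intro ω
    by_cases hω : T ω = ⊤
    · rw [hV]
      simp only
      rw [dif_neg (by rw [hfin ω]; simp [hω]), Finset.sum_eq_zero]
      intro m _
      rw [if_neg]
      rw [hω]
      intro hc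
      exact (ENat.top_ne_coe _) hc
    · obtain ⟨t, ht⟩ : ∃ t : ℕ, T ω = (t:ℕ∞) := ⟨(T ω).toNat, (ENat.coe_toNat hω).symm⟩
      have hcond := (hfin ω).mpr hω
      have htt : (T ω).toNat = t := by rw [ht]; simp
      rw [htt] at hcond
      rw [hV]
      simp only [ht, ENat.toNat_coe]
      rw [dif_pos hcond]
      rw [Fintype.sum_eq_single (⟨t - 1, by omega⟩ : Fin (2*k))]
      · rw [if_pos (by exact_mod_cast congrArg (Nat.cast : ℕ → ℕ∞) (by omega : t = (t-1) + 1))]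
      · intro m hm
        rw [if_neg]
        intro hcEq
        apply hm
        have hmt : t = (m:ℕ) + 1 := by exact_mod_cast hcEq
        apply Fin.ext
        simp only
        omega
  have hVmeas : Measurable V := by
    have heq : V = fun ω =>
        ∑ m : Fin (2*k), if T ω = (((m:ℕ)+1 : ℕ) : ℕ∞) then X (σ ω m) ω else 0 :=
      funext hVsum
    rw [heq]
    exact Finset.measurable_sum _ fun m _ =>
      Measurable.ite (hTeq (m:ℕ)) (hXσ m) measurable_const
  -- single-point masses of the random rewards
  have hzero : ∀ i : Fin (2*k), k ≤ (i:ℕ) → μ (X i ⁻¹' ({0} : Set ℝ)) = ENNReal.ofReal p := by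
    intro i hi
    rw [← Measure.map_apply (hmX i) (measurableSet_singleton 0), hXrand i hi]
    rw [Measure.add_apply, Measure.smul_apply, Measure.smul_apply, smul_eq_mul, smul_eq_mul,
      Measure.dirac_apply' _ (measurableSet_singleton 0),
      Measure.dirac_apply' _ (measurableSet_singleton 0)]
    have h0 : (1:ℝ) + Real.sqrt ε ≠ 0 := by positivity
    simp [Set.indicator_apply, h0]
  -- a.e. values of the random rewards
  have hXval : ∀ i : Fin (2*k), k ≤ (i:ℕ) →
      ∀ᵐ ω ∂μ, X i ω = 0 ∨ X i ω = 1 + Real.sqrt ε := by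
    intro i hi
    have hs : MeasurableSet ({0, 1 + Real.sqrt ε} : Set ℝ) :=
      (measurableSet_singleton _).insert 0
    have hnull : μ (X i ⁻¹' ({0, 1 + Real.sqrt ε} : Set ℝ)ᶜ) = 0 := by
      rw [← Measure.map_apply (hmX i) hs.compl, hXrand i hi]
      rw [Measure.add_apply, Measure.smul_apply, Measure.smul_apply, smul_eq_mul, smul_eq_mul,
        Measure.dirac_apply' _ hs.compl, Measure.dirac_apply' _ hs.compl]
      have h0 : (1:ℝ) + Real.sqrt ε ≠ 0 := by positivity
      simp [Set.indicator_apply, h0]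
    rw [ae_iff]
    have hset : {ω | ¬(X i ω = 0 ∨ X i ω = 1 + Real.sqrt ε)}
        = X i ⁻¹' ({0, 1 + Real.sqrt ε} : Set ℝ)ᶜ := by
      ext ω; simp [not_or]
    rw [hset]
    exact hnull
  have hE : ∀ᵐ ω ∂μ, ∀ i : Fin (2*k), k ≤ (i:ℕ) → (X i ω = 0 ∨ X i ω = 1 + Real.sqrt ε) := by
    rw [ae_all_iff]
    intro i
    by_cases hi : k ≤ (i:ℕ)
    · exact (hXval i hi).mono fun ω h _ => h
    · exact Filter.Eventually.of_forall fun ω h => absurd h hi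
  -- case analysis for V
  have hVcases : ∀ ω, (∀ i : Fin (2*k), k ≤ (i:ℕ) → (X i ω = 0 ∨ X i ω = 1 + Real.sqrt ε)) →
      V ω = 0 ∨ V ω = 1 ∨ V ω = 1 + Real.sqrt ε := by
    intro ω hω
    by_cases h : 1 ≤ (T ω).toNat ∧ (T ω).toNat ≤ 2*k
    · rw [hV]
      simp only
      rw [dif_pos h]
      by_cases hj : ((σ ω ⟨(T ω).toNat - 1, by omega⟩ : Fin (2*k)) : ℕ) < k
      · exact Or.inr (Or.inl (hXdet _ hj ω))
      · rcases hω _ (le_of_not_gt hj) with h0 | h1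
        · exact Or.inl h0
        · exact Or.inr (Or.inr h1)
    · rw [hV]; simp only; rw [dif_neg h]; exact Or.inl rfl
  have hVint : Integrable V μ := by
    refine Integrable.mono' (integrable_const (1 + Real.sqrt ε))
      hVmeas.aestronglyMeasurable ?_
    filter_upwards [hE] with ω hω
    rcases hVcases ω hω with h | h | h <;> rw [h]
    · simp only [norm_zero]; positivity
    · simp only [norm_one]; linarith [hs0]
    · rw [Real.norm_eq_abs, abs_of_nonneg (by positivity)]
  -- the event that all random rewards are zero
  set Aset : Set Ω := {ω | ∀ i : Fin (2*k), k ≤ (i:ℕ) → X i ω = 0} with hAdef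
  have hmA : MeasurableSet Aset := by
    have heq : Aset = ⋂ i : Fin (2*k), {ω | k ≤ (i:ℕ) → X i ω = 0} := by
      ext ω; simp [hAdef]
    rw [heq]
    refine MeasurableSet.iInter fun i => ?_
    by_cases hi : k ≤ (i:ℕ)
    · have h2 : {ω | k ≤ (i:ℕ) → X i ω = 0} = X i ⁻¹' {0} := by ext ω; simp [hi]
      rw [h2]
      exact (hmX i) (measurableSet_singleton 0)
    · have h2 : {ω | k ≤ (i:ℕ) → X i ω = 0} = Set.univ := by ext ω; simp [hi]
      rw [h2]
      exact MeasurableSet.univ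
  have hSkcard : (Finset.univ.filter (fun i : Fin (2*k) => k ≤ (i:ℕ))).card = k := by
    have key : ∀ n : ℕ, (∑ m ∈ Finset.range (k+n), if k ≤ m then (1:ℕ) else 0) = n := by
      intro n
      induction n with
      | zero =>
          simp only [Nat.add_zero]
          refine Finset.sum_eq_zero fun m hm => ?_
          simp only [Finset.mem_range] at hm
          rw [if_neg (by omega)]
      | succ n ih =>
          rw [show k+(n+1) = (k+n)+1 by ring, Finset.sum_range_succ, ih, if_pos (by omega)]
    rw [Finset.card_filter, Fin.sum_univ_eq_sum_range (fun m => if k ≤ m then (1:ℕ) else 0),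
      show 2*k = k+k by ring, key]
  have hμA : μ Aset = ENNReal.ofReal p ^ k := by
    have hA : Aset
        = ⋂ i ∈ Finset.univ.filter (fun i : Fin (2*k) => k ≤ (i:ℕ)), X i ⁻¹' ({0} : Set ℝ) := by
      ext ω
      simp [hAdef, Finset.mem_filter]
    rw [hA, hXindep.measure_inter_preimage_eq_mul
      (Finset.univ.filter (fun i : Fin (2*k) => k ≤ (i:ℕ)))
      (sets := fun _ => ({0} : Set ℝ)) (fun i _ => measurableSet_singleton 0)]
    rw [Finset.prod_congr rfl (fun i hi => hzero i (Finset.mem_filter.mp hi).2),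
      Finset.prod_const, hSkcard]
  -- the bad-order event
  set Bset : Set Ω := {ω | ∀ j : Fin (2*k), (j:ℕ) < k → ((σ ω j : ℕ) < k)} with hBdef
  set B' : Set (Fin (2*k) → Fin (2*k)) := {g | ∀ j : Fin (2*k), (j:ℕ) < k → ((g j : ℕ) < k)}
    with hB'def
  have hmB : MeasurableSet Bset := hmσ (Set.toFinite B').measurableSet
  have hσe : ∀ e : Equiv.Perm (Fin (2*k)), MeasurableSet {ω | σ ω = ⇑e} := by
    intro e
    exact hmσ (Set.toFinite {⇑e}).measurableSet
  have hμB : ((4:ENNReal) ^ k)⁻¹ ≤ μ Bset := by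
    set Pk : Finset (Equiv.Perm (Fin (2*k))) := Finset.univ.filter
      (fun e : Equiv.Perm (Fin (2*k)) => ∀ j : Fin (2*k), (j:ℕ) < k → ((e j : ℕ) < k))
      with hPkdef
    have hsub : (⋃ e ∈ Pk, {ω | σ ω = ⇑e}) ⊆ Bset := by
      intro ω hω
      simp only [Set.mem_iUnion] at hω
      obtain ⟨e, he, hσω⟩ := hω
      simp only [Set.mem_setOf_eq] at hσω
      intro j hj
      rw [hσω]
      exact (Finset.mem_filter.mp he).2 j hj
    have hdisj : (Pk : Set (Equiv.Perm (Fin (2*k)))).PairwiseDisjoint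
        (fun e => {ω | σ ω = ⇑e}) := by
      intro e₁ _ e₂ _ hne
      apply Set.disjoint_left.mpr
      intro ω h1 h2
      simp only [Set.mem_setOf_eq] at h1 h2
      exact hne (Equiv.coe_fn_injective (h1.symm.trans h2))
    have hsum : ∑ e ∈ Pk, μ {ω | σ ω = ⇑e} = μ (⋃ e ∈ Pk, {ω | σ ω = ⇑e}) :=
      (measure_biUnion_finset hdisj (fun e _ => hσe e)).symm
    have hcount : ((4:ENNReal) ^ k)⁻¹ ≤ ∑ e ∈ Pk, μ {ω | σ ω = ⇑e} := by
      rw [Finset.sum_congr rfl (fun e _ => hσunif e), Finset.sum_const, nsmul_eq_mul]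
      have hnat : (2*k).factorial ≤ 4^k * (k.factorial * k.factorial) := by
        have h1 : (2*k).choose k * k.factorial * (2*k - k).factorial = (2*k).factorial :=
          Nat.choose_mul_factorial_mul_factorial (by omega)
        have h2 : (2*k).choose k ≤ 4^k := by
          have h3 : (2*k).choose k ≤ ∑ i ∈ Finset.range (2*k+1), (2*k).choose i :=
            Finset.single_le_sum (f := fun i => (2*k).choose i)
              (fun i _ => Nat.zero_le _) (Finset.mem_range.mpr (by omega))
          rw [Nat.sum_range_choose] at h3
          calc (2*k).choose k ≤ 2^(2*k) := h3
            _ = 4^k := by rw [pow_mul]; norm_num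
        have h4 : 2*k - k = k := by omega
        rw [h4] at h1
        calc (2*k).factorial = (2*k).choose k * k.factorial * k.factorial := h1.symm
          _ ≤ 4^k * k.factorial * k.factorial :=
              Nat.mul_le_mul_right _ (Nat.mul_le_mul_right _ h2)
          _ = 4^k * (k.factorial * k.factorial) := by ring
      have hnat2 : (2*k).factorial ≤ 4^k * Pk.card :=
        hnat.trans (Nat.mul_le_mul_left _ (perm_count k))
      have h2k0 : (((2*k).factorial : ℕ) : ENNReal) ≠ 0 := by
        exact_mod_cast (Nat.factorial_pos _).ne'
      have h2kt : (((2*k).factorial : ℕ) : ENNReal) ≠ ⊤ := ENNReal.natCast_ne_top _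
      have h40 : ((4:ENNReal) ^ k) ≠ 0 := by positivity
      have h4t : ((4:ENNReal) ^ k) ≠ ⊤ := ENNReal.pow_ne_top (by norm_num)
      rw [← div_eq_mul_inv, ENNReal.le_div_iff_mul_le (Or.inl h2k0) (Or.inl h2kt)]
      have hcast : (((2*k).factorial : ℕ) : ENNReal) ≤ (4:ENNReal)^k * (Pk.card : ENNReal) := by
        calc (((2*k).factorial : ℕ) : ENNReal) ≤ ((4^k * Pk.card : ℕ) : ENNReal) := by
              exact_mod_cast hnat2
          _ = (4:ENNReal)^k * (Pk.card : ENNReal) := by push_cast; ring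
      calc ((4:ENNReal)^k)⁻¹ * (((2*k).factorial : ℕ) : ENNReal)
          ≤ ((4:ENNReal)^k)⁻¹ * ((4:ENNReal)^k * (Pk.card : ENNReal)) :=
            mul_le_mul_right hcast _
        _ = (Pk.card : ENNReal) := by
            rw [← mul_assoc, ENNReal.inv_mul_cancel h40 h4t, one_mul]
    calc ((4:ENNReal) ^ k)⁻¹ ≤ ∑ e ∈ Pk, μ {ω | σ ω = ⇑e} := hcount
      _ = μ (⋃ e ∈ Pk, {ω | σ ω = ⇑e}) := hsum
      _ ≤ μ Bset := measure_mono hsub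
  -- independence of the "bad order, late stopping" event from the reward values
  obtain ⟨S, hSmeas, hSpre⟩ := hTstop k
  set fk : Ω → (Fin (2*k) → Fin (2*k) × ℝ) := fun ω j =>
    if (j:ℕ) < k then (σ ω j, X (σ ω j) ω) else (⟨0, hN⟩, 0) with hfk
  set G : (Fin (2*k) → Fin (2*k)) → (Fin (2*k) → Fin (2*k) × ℝ) := fun g j =>
    if (j:ℕ) < k then (g j, 1) else (⟨0, hN⟩, 0) with hG
  have hGf : ∀ ω, ω ∈ Bset → fk ω = G (σ ω) := by
    intro ω hB
    funext j
    by_cases hj : (j:ℕ) < k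
    · simp only [hfk, hG, if_pos hj]
      rw [hXdet (σ ω j) (hB j hj) ω]
    · simp only [hfk, hG, if_neg hj]
  set U : Set (Fin (2*k) → Fin (2*k)) := B' ∩ (G ⁻¹' S)ᶜ with hUdef
  have hUpre : σ ⁻¹' U = Bset ∩ {ω | T ω ≤ (k:ℕ∞)}ᶜ := by
    ext ω
    simp only [Set.mem_preimage, hUdef, Set.mem_inter_iff, Set.mem_compl_iff]
    constructor
    · rintro ⟨hB', hGS⟩
      refine ⟨hB', fun hT => hGS ?_⟩
      show σ ω ∈ G ⁻¹' S
      rw [Set.mem_preimage, ← hGf ω hB']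
      rw [← hSpre] at hT
      exact hT
    · rintro ⟨hB, hT⟩
      refine ⟨hB, fun hGS => hT ?_⟩
      rw [← hSpre]
      show fk ω ∈ S
      rw [hGf ω hB]
      exact hGS
  have hWmeas : MeasurableSet {g : Fin (2*k) → ℝ | ∀ i : Fin (2*k), k ≤ (i:ℕ) → g i = 0} := by
    have heq : {g : Fin (2*k) → ℝ | ∀ i : Fin (2*k), k ≤ (i:ℕ) → g i = 0}
        = ⋂ i : Fin (2*k), {g : Fin (2*k) → ℝ | k ≤ (i:ℕ) → g i = 0} := by
      ext g; simp
    rw [heq]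
    refine MeasurableSet.iInter fun i => ?_
    by_cases hi : k ≤ (i:ℕ)
    · have h2 : {g : Fin (2*k) → ℝ | k ≤ (i:ℕ) → g i = 0}
          = (fun g : Fin (2*k) → ℝ => g i) ⁻¹' {0} := by ext g; simp [hi]
      rw [h2]
      exact (measurable_pi_apply i) (measurableSet_singleton 0)
    · have h2 : {g : Fin (2*k) → ℝ | k ≤ (i:ℕ) → g i = 0} = Set.univ := by ext g; simp [hi]
      rw [h2]
      exact MeasurableSet.univ
  have hkey : μ (Bset ∩ {ω | T ω ≤ (k:ℕ∞)}ᶜ ∩ Aset)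
      = μ (Bset ∩ {ω | T ω ≤ (k:ℕ∞)}ᶜ) * ENNReal.ofReal p ^ k := by
    have hApre : Aset = (fun ω (m : Fin (2*k)) => X m ω) ⁻¹'
        {g : Fin (2*k) → ℝ | ∀ i : Fin (2*k), k ≤ (i:ℕ) → g i = 0} := rfl
    have hind := (indepFun_iff_measure_inter_preimage_eq_mul.mp hσindep)
      {g : Fin (2*k) → ℝ | ∀ i : Fin (2*k), k ≤ (i:ℕ) → g i = 0} U hWmeas
      ((Set.toFinite U).measurableSet)
    rw [hUpre, ← hApre] at hind
    calc μ (Bset ∩ {ω | T ω ≤ (k:ℕ∞)}ᶜ ∩ Aset)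
        = μ (Aset ∩ (Bset ∩ {ω | T ω ≤ (k:ℕ∞)}ᶜ)) := by rw [Set.inter_comm]
      _ = μ Aset * μ (Bset ∩ {ω | T ω ≤ (k:ℕ∞)}ᶜ) := hind
      _ = μ (Bset ∩ {ω | T ω ≤ (k:ℕ∞)}ᶜ) * ENNReal.ofReal p ^ k := by
          rw [hμA, mul_comm]
  -- the dominating function
  set S1 : Set Ω := Bset ∩ {ω | T ω ≤ (k:ℕ∞)} with hS1def
  set C : Set Ω := Bset ∩ {ω | T ω ≤ (k:ℕ∞)}ᶜ with hCdef
  set S2 : Set Ω := C ∩ Asetᶜ with hS2def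
  set S3 : Set Ω := Bsetᶜ with hS3def
  have hmS1 : MeasurableSet S1 := hmB.inter (hTle k)
  have hmC : MeasurableSet C := hmB.inter (hTle k).compl
  have hmS2 : MeasurableSet S2 := hmC.inter hmA.compl
  have hmS3 : MeasurableSet S3 := hmB.compl
  set f : Ω → ℝ := fun ω => S1.indicator (fun _ => (1:ℝ)) ω
      + S2.indicator (fun _ => 1 + Real.sqrt ε) ω
      + S3.indicator (fun _ => 1 + Real.sqrt ε) ω with hfdef
  have hi1 : Integrable (S1.indicator fun _ => (1:ℝ)) μ := (integrable_const _).indicator hmS1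
  have hi2 : Integrable (S2.indicator fun _ => (1 + Real.sqrt ε)) μ :=
    (integrable_const _).indicator hmS2
  have hi3 : Integrable (S3.indicator fun _ => (1 + Real.sqrt ε)) μ :=
    (integrable_const _).indicator hmS3
  have hfint : Integrable f μ := (hi1.add hi2).add hi3
  -- pointwise a.e. domination
  have hVf : ∀ᵐ ω ∂μ, V ω ≤ f ω := by
    filter_upwards [hE] with ω hω
    have hind1 : (0:ℝ) ≤ S1.indicator (fun _ => (1:ℝ)) ω :=
      Set.indicator_nonneg (fun _ _ => zero_le_one) ω
    have hind2 : (0:ℝ) ≤ S2.indicator (fun _ => 1 + Real.sqrt ε) ω :=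
      Set.indicator_nonneg (fun _ _ => by positivity) ω
    have hind3 : (0:ℝ) ≤ S3.indicator (fun _ => 1 + Real.sqrt ε) ω :=
      Set.indicator_nonneg (fun _ _ => by positivity) ω
    have hfapp : f ω = S1.indicator (fun _ => (1:ℝ)) ω
        + S2.indicator (fun _ => 1 + Real.sqrt ε) ω
        + S3.indicator (fun _ => 1 + Real.sqrt ε) ω := rfl
    by_cases hB : ω ∈ Bset
    · by_cases hT : T ω ≤ (k:ℕ∞)
      · have hmem1 : ω ∈ S1 := by rw [hS1def]; exact ⟨hB, hT⟩
        have hf1 : S1.indicator (fun _ => (1:ℝ)) ω = 1 :=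
          Set.indicator_of_mem hmem1 _
        have hVle1 : V ω ≤ 1 := by
          by_cases hc : 1 ≤ (T ω).toNat ∧ (T ω).toNat ≤ 2*k
          · have hne : T ω ≠ ⊤ := (hfin ω).mp hc
            have htk : (T ω).toNat ≤ k := by
              have hcc := ENat.coe_toNat hne
              rw [← hcc] at hT
              exact_mod_cast hT
            have hjlt : ((σ ω ⟨(T ω).toNat - 1, by omega⟩ : Fin (2*k)) : ℕ) < k :=
              hB _ (by simp only; omega)
            rw [hV]; simp only; rw [dif_pos hc, hXdet _ hjlt ω]
          · rw [hV]; simp only; rw [dif_neg hc]; norm_num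
        rw [hfapp]; linarith
      · by_cases hc : 1 ≤ (T ω).toNat ∧ (T ω).toNat ≤ 2*k
        · have hne : T ω ≠ ⊤ := (hfin ω).mp hc
          have htk : k < (T ω).toNat := by
            by_contra hle
            push_neg at hle
            apply hT
            rw [← ENat.coe_toNat hne]
            exact_mod_cast hle
          have hjk : k ≤ ((⟨(T ω).toNat - 1, by omega⟩ : Fin (2*k)) : ℕ) := by
            simp only; omega
          have hσjk : k ≤ ((σ ω ⟨(T ω).toNat - 1, by omega⟩ : Fin (2*k)) : ℕ) :=
            maps_ge k (σ ω) (hσbij ω).1 hB _ hjk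
          have hVX : V ω = X (σ ω ⟨(T ω).toNat - 1, by omega⟩) ω := dif_pos hc
          rcases Classical.em (ω ∈ Aset) with hA | hA
          · rw [hVX, hA _ hσjk, hfapp]
            linarith
          · have hmem2 : ω ∈ S2 := by
              rw [hS2def]
              exact ⟨by rw [hCdef]; exact ⟨hB, hT⟩, hA⟩
            have hf2 : S2.indicator (fun _ => 1 + Real.sqrt ε) ω = 1 + Real.sqrt ε :=
              Set.indicator_of_mem hmem2 _
            rcases hω _ hσjk with h0 | h1
            · rw [hVX, h0, hfapp]; linarith
            · rw [hVX, h1, hfapp]; linarith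
        · rw [hV]; simp only; rw [dif_neg hc, hfapp]; linarith
    · have hmem3 : ω ∈ S3 := by rw [hS3def]; exact hB
      have hf3 : S3.indicator (fun _ => 1 + Real.sqrt ε) ω = 1 + Real.sqrt ε :=
        Set.indicator_of_mem hmem3 _
      rcases hVcases ω hω with h | h | h <;> rw [h, hfapp] <;> linarith [hs0]
  -- integral of the dominating function
  have hIf : ∫ ω, f ω ∂μ = (μ S1).toReal * 1 + (μ S2).toReal * (1 + Real.sqrt ε)
      + (μ S3).toReal * (1 + Real.sqrt ε) := by
    have e1 : ∫ ω, f ω ∂μ = (∫ ω, (S1.indicator (fun _ => (1:ℝ)) ω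
        + S2.indicator (fun _ => 1 + Real.sqrt ε) ω) ∂μ)
        + ∫ ω, S3.indicator (fun _ => 1 + Real.sqrt ε) ω ∂μ :=
      integral_add (hi1.add hi2) hi3
    have e2 : ∫ ω, (S1.indicator (fun _ => (1:ℝ)) ω
        + S2.indicator (fun _ => 1 + Real.sqrt ε) ω) ∂μ
        = (∫ ω, S1.indicator (fun _ => (1:ℝ)) ω ∂μ)
        + ∫ ω, S2.indicator (fun _ => 1 + Real.sqrt ε) ω ∂μ :=
      integral_add hi1 hi2
    rw [e1, e2, integral_indicator_const _ hmS1, integral_indicator_const _ hmS2,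
      integral_indicator_const _ hmS3]
    simp [smul_eq_mul, mul_comm]; rfl
  -- measure identities, in real numbers
  have hμS1fin : μ S1 ≠ ⊤ := measure_ne_top μ _
  have hμCfin : μ C ≠ ⊤ := measure_ne_top μ _
  have hS1C : (μ S1).toReal + (μ C).toReal = (μ Bset).toReal := by
    rw [← ENNReal.toReal_add hμS1fin hμCfin]
    congr 1
    rw [hS1def, hCdef]
    rw [← measure_inter_add_diff Bset (hTle k), Set.diff_eq]
  have hqle : ENNReal.ofReal p ^ k ≤ 1 :=
    pow_le_one' (ENNReal.ofReal_le_one.mpr hp1.le) k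
  have hS2mC : μ S2 = μ C - μ C * ENNReal.ofReal p ^ k := by
    have hsplit : S2 = C \ (C ∩ Aset) := by
      rw [hS2def]
      ext ω
      simp only [Set.mem_inter_iff, Set.mem_compl_iff, Set.mem_diff]
      tauto
    rw [hsplit, measure_diff Set.inter_subset_left (hmC.inter hmA).nullMeasurableSet
      (measure_ne_top μ _)]
    congr 1
  have hS2real : (μ S2).toReal = (μ C).toReal * (1 - p^k) := by
    rw [hS2mC, ENNReal.toReal_sub_of_le (mul_le_of_le_one_right (by simp) hqle) hμCfin]
    rw [ENNReal.toReal_mul, ENNReal.toReal_pow, ENNReal.toReal_ofReal hp0.le]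
    ring
  have hS3real : (μ S3).toReal = 1 - (μ Bset).toReal := by
    rw [hS3def, prob_compl_eq_one_sub hmB,
      ENNReal.toReal_sub_of_le prob_le_one ENNReal.one_ne_top, ENNReal.toReal_one]
  have hbB4 : ((4:ℝ)^k)⁻¹ ≤ (μ Bset).toReal := by
    have h1 : (((4:ENNReal)^k)⁻¹).toReal = ((4:ℝ)^k)⁻¹ := by
      rw [ENNReal.toReal_inv, ENNReal.toReal_pow]
      norm_num
    rw [← h1]
    exact ENNReal.toReal_mono (measure_ne_top μ _) hμB
  have hbB1 : (μ Bset).toReal ≤ 1 := by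
    have := prob_le_one (μ := μ) (s := Bset)
    have h2 := ENNReal.toReal_mono ENNReal.one_ne_top this
    simpa using h2
  -- main bound
  have hmain : ∫ ω, V ω ∂μ ≤ 1 + Real.sqrt ε - Real.sqrt ε / 4 ^ k := by
    have hle := integral_mono_ae hVint hfint hVf
    rw [hIf] at hle
    set b1 : ℝ := (μ S1).toReal
    set c : ℝ := (μ C).toReal
    set bB : ℝ := (μ Bset).toReal
    have hb10 : 0 ≤ b1 := ENNReal.toReal_nonneg
    have hc0 : 0 ≤ c := ENNReal.toReal_nonneg
    have hstep1 : c * (1 - p^k) * (1 + Real.sqrt ε) ≤ c := by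
      have h1 : (1 - p^k) * (1 + Real.sqrt ε) ≤ 1 := by
        rw [hsqε]
        nlinarith [sq_nonneg (p^k), pow_nonneg hp0.le k]
      calc c * (1 - p^k) * (1 + Real.sqrt ε) = c * ((1 - p^k) * (1 + Real.sqrt ε)) := by ring
        _ ≤ c * 1 := mul_le_mul_of_nonneg_left h1 hc0
        _ = c := mul_one c
    have hstep2 : Real.sqrt ε / 4^k ≤ Real.sqrt ε * bB := by
      rw [div_eq_mul_inv]
      exact mul_le_mul_of_nonneg_left hbB4 hs0.le
    calc ∫ ω, V ω ∂μ ≤ b1 * 1 + (μ S2).toReal * (1 + Real.sqrt ε)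
          + (μ S3).toReal * (1 + Real.sqrt ε) := hle
      _ = b1 + c * (1 - p^k) * (1 + Real.sqrt ε) + (1 - bB) * (1 + Real.sqrt ε) := by
          rw [hS2real, hS3real]; ring
      _ ≤ b1 + c + (1 - bB) * (1 + Real.sqrt ε) := by linarith
      _ = 1 + Real.sqrt ε - Real.sqrt ε * bB := by
          have : b1 + c = bB := hS1C
          nlinarith [this]
      _ ≤ 1 + Real.sqrt ε - Real.sqrt ε / 4^k := by linarith
  refine ⟨hmain, ?_⟩
  -- final numeric inequality
  set s : ℝ := Real.sqrt ε with hsdef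
  have hsp : s ≤ p := by
    rw [hsqε]
    exact pow_le_of_le_one hp0.le hp1.le (by omega)
  have hs1 : s ≤ 1 := hsp.trans hp1.le
  have hε2 : ε = s * s := by rw [hsdef]; exact (Real.mul_self_sqrt hε0.le).symm
  have h3p : 3 * p * 4 ^ k < 1 := by
    have hq : p = (Real.exp (-2)) ^ k := by
      rw [hpdef, ← Real.exp_nat_mul]; congr 1; ring
    have he2 : (7:ℝ) < Real.exp 2 := by
      have h1 : (2.7182818283:ℝ) < Real.exp 1 := Real.exp_one_gt_d9
      have h2 : Real.exp 2 = Real.exp 1 * Real.exp 1 := by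
        rw [← Real.exp_add]; norm_num
      nlinarith
    have hq7 : Real.exp (-2) < 1/7 := by
      rw [Real.exp_neg]
      rw [inv_lt_comm₀ (Real.exp_pos 2) (by norm_num)]
      linarith
    have hq0 : (0:ℝ) < Real.exp (-2) := Real.exp_pos _
    have key : p * 4 ^ k ≤ (4/7 : ℝ) ^ 4 := by
      have h3 : p * 4 ^ k = (4 * Real.exp (-2)) ^ k := by
        rw [hq, mul_pow]; ring
      have h4 : (4 * Real.exp (-2) : ℝ) ^ k ≤ (4/7 : ℝ) ^ k :=
        pow_le_pow_left₀ (by positivity) (by linarith) k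
      have h5 : ((4:ℝ)/7) ^ k ≤ (4/7:ℝ) ^ 4 :=
        pow_le_pow_of_le_one (by norm_num) (by norm_num) hk
      linarith [h3 ▸ (h4.trans h5)]
    nlinarith
  have h4k : (0:ℝ) < 4^k := by positivity
  have hpinv : 3 * p < ((4:ℝ)^k)⁻¹ := by
    rw [inv_eq_one_div, lt_div_iff₀ h4k]
    linarith
  have hlt : p + s + s * s * (1-p) < ((4:ℝ)^k)⁻¹ := by
    have h2 : s + s * s * (1-p) ≤ 2*p := by
      nlinarith [hsp, hs1, hp1, hs0.le]
    linarith
  have hexpand : (1-ε)*(1 + s*(1-p)) - (1 + s - s / 4^k)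
      = s * (((4:ℝ)^k)⁻¹ - (p + s + s * s * (1-p))) := by
    rw [hε2, div_eq_mul_inv]
    ring
  linarith [mul_pos hs0 (sub_pos.mpr hlt), hexpand]
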